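/- Let α ∈ (0,1), let F be a cumulative distribution function with m(F) finite that satisfies the quantile growth condition at level α with constants b_α > 0 and M_α > 0, and let G be a cumulative distribution function with d(F,G) finite. Then |VaR_α(F) − VaR_α(G)| ≤ max{ b_α, (1 + 2·m(F)/M_α) / min{α, 1−α} } · d(F,G); that is, the value-at-risk is Lipschitz in this norm with explicit constant. -/

import Mathlib

open MeasureTheory

/-- A cumulative distribution function: nondecreasing, right-continuous,
tending to `0` at `−∞` and to `1` at `+∞`. -/
def IsCDF (F : ℝ → ℝ) : Prop :=
  Monotone F ∧ (∀ y : ℝ, ContinuousWithinAt F (Set.Ici y) y) ∧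
    Filter.Tendsto F Filter.atBot (nhds 0) ∧ Filter.Tendsto F Filter.atTop (nhds 1)

/-- Value-at-risk at level `α`: `VaR_α(F) = inf{ y : F y ≥ α }`. -/
noncomputable def VaR (α : ℝ) (F : ℝ → ℝ) : ℝ :=
  sInf {y : ℝ | α ≤ F y}

/-- `m(F) = max{1, ∫_{−∞}^0 F, ∫_0^∞ (1 − F)}`, a tail-size functional. -/
noncomputable def mTail (F : ℝ → ℝ) : ℝ :=
  max 1 (max (∫ y in Set.Iic (0 : ℝ), F y) (∫ y in Set.Ioi (0 : ℝ), (1 - F y)))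

/-- `d(F,G) = max{ sup_y |F−G|, |∫_{−∞}^0 (F−G)|, |∫_0^∞ (F−G)| }`, the norm
distance between two CDFs. -/
noncomputable def dDist (F G : ℝ → ℝ) : ℝ :=
  max (⨆ y : ℝ, |F y - G y|)
    (max |∫ y in Set.Iic (0 : ℝ), (F y - G y)| |∫ y in Set.Ioi (0 : ℝ), (F y - G y)|)

/-- `F` satisfies the quantile growth condition at level `α` with constants
`b, M`: `|F(VaR_α(F) + b·y) − α| ≥ |y|` for all `y ∈ [−M, M]`. -/
def QuantileGrowth (α : ℝ) (F : ℝ → ℝ) (b M : ℝ) : Prop :=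
  ∀ y ∈ Set.Icc (-M) M, |y| ≤ |F (VaR α F + b * y) - α|

/- ### Auxiliary lemmas -/

lemma isCDF_nonneg {F : ℝ → ℝ} (hF : IsCDF F) (y : ℝ) : 0 ≤ F y :=
  le_of_tendsto hF.2.2.1 (Filter.eventually_atBot.mpr ⟨y, fun z hz => hF.1 hz⟩)

lemma isCDF_le_one {F : ℝ → ℝ} (hF : IsCDF F) (y : ℝ) : F y ≤ 1 :=
  ge_of_tendsto hF.2.2.2 (Filter.eventually_atTop.mpr ⟨y, fun z hz => hF.1 hz⟩)

lemma VaR_set_nonempty {α : ℝ} {F : ℝ → ℝ} (hα : α ∈ Set.Ioo (0:ℝ) 1) (hF : IsCDF F) :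
    {y : ℝ | α ≤ F y}.Nonempty := by
  obtain ⟨y, hy⟩ := (hF.2.2.2.eventually (eventually_ge_nhds hα.2)).exists
  exact ⟨y, hy⟩

lemma VaR_set_bddBelow {α : ℝ} {F : ℝ → ℝ} (hα : α ∈ Set.Ioo (0:ℝ) 1) (hF : IsCDF F) :
    BddBelow {y : ℝ | α ≤ F y} := by
  obtain ⟨z, hz⟩ := (hF.2.2.1.eventually (eventually_lt_nhds hα.1)).exists
  exact ⟨z, fun y hy => le_of_not_gt fun h => absurd (hy.trans (hF.1 h.le)) (not_le.mpr hz)⟩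

lemma le_F_VaR {α : ℝ} {F : ℝ → ℝ} (hα : α ∈ Set.Ioo (0:ℝ) 1) (hF : IsCDF F) :
    α ≤ F (VaR α F) := by
  have hne := VaR_set_nonempty hα hF
  have hbdd := VaR_set_bddBelow hα hF
  have hcont : Filter.Tendsto F (nhdsWithin (VaR α F) (Set.Ioi (VaR α F))) (nhds (F (VaR α F))) :=
    (hF.2.1 (VaR α F)).mono_left (nhdsWithin_mono _ Set.Ioi_subset_Ici_self)
  refine ge_of_tendsto hcont ?_
  refine eventually_nhdsWithin_of_forall fun x hx => ?_
  obtain ⟨s, hs, hsx⟩ := exists_lt_of_csInf_lt hne hx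
  exact le_trans hs (hF.1 hsx.le)

lemma F_lt_of_lt_VaR {α : ℝ} {F : ℝ → ℝ} (hα : α ∈ Set.Ioo (0:ℝ) 1) (hF : IsCDF F)
    {x : ℝ} (hx : x < VaR α F) : F x < α := by
  by_contra h
  push_neg at h
  exact absurd (csInf_le (VaR_set_bddBelow hα hF) h) (not_le.mpr hx)

/-- Bound on `|VaR|` in terms of the tail integrals. -/
lemma VaR_abs_le {α : ℝ} (hα : α ∈ Set.Ioo (0:ℝ) 1) {H : ℝ → ℝ} (hH : IsCDF H)
    (hI1 : IntegrableOn H (Set.Iic (0:ℝ))) (hI2 : IntegrableOn (fun y => 1 - H y) (Set.Ioi (0:ℝ)))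
    {C : ℝ} (h1 : (∫ y in Set.Iic (0:ℝ), H y) ≤ C) (h2 : (∫ y in Set.Ioi (0:ℝ), (1 - H y)) ≤ C) :
    |VaR α H| ≤ C / min α (1 - α) := by
  have hmin : 0 < min α (1 - α) := lt_min hα.1 (by linarith [hα.2])
  have hC : 0 ≤ C :=
    le_trans (setIntegral_nonneg measurableSet_Iic fun y _ => isCDF_nonneg hH y) h1
  set v := VaR α H with hv
  rcases le_or_gt v 0 with hv0 | hv0
  · have hconst : ∫ _ in Set.Ioc v 0, (α : ℝ) ≤ ∫ y in Set.Ioc v 0, H y := by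
      refine setIntegral_mono_on
        (integrableOn_const (by rw [Real.volume_Ioc]; exact ENNReal.ofReal_ne_top))
        (hI1.mono_set Set.Ioc_subset_Iic_self) measurableSet_Ioc fun x hx => ?_
      exact (le_F_VaR hα hH).trans (hH.1 hx.1.le)
    have hsub : ∫ y in Set.Ioc v 0, H y ≤ ∫ y in Set.Iic 0, H y :=
      setIntegral_mono_set hI1 (Filter.Eventually.of_forall fun y => isCDF_nonneg hH y)
        (Set.Ioc_subset_Iic_self.eventuallyLE)
    rw [setIntegral_const, Real.volume_real_Ioc_of_le hv0, smul_eq_mul]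
      at hconst
    have hkey : α * (-v) ≤ C := by nlinarith
    rw [abs_of_nonpos hv0, le_div_iff₀ hmin]
    nlinarith [min_le_left α (1 - α)]
  · have hconst : ∫ _ in Set.Ioo 0 v, (1 - α : ℝ) ≤ ∫ y in Set.Ioo 0 v, (1 - H y) := by
      refine setIntegral_mono_on
        (integrableOn_const (by rw [Real.volume_Ioo]; exact ENNReal.ofReal_ne_top))
        (hI2.mono_set Set.Ioo_subset_Ioi_self) measurableSet_Ioo fun x hx => ?_
      have := F_lt_of_lt_VaR hα hH hx.2
      linarith
    have hsub : ∫ y in Set.Ioo 0 v, (1 - H y) ≤ ∫ y in Set.Ioi 0, (1 - H y) :=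
      setIntegral_mono_set hI2
        (Filter.Eventually.of_forall fun y => by
          simp only [Pi.zero_apply]; linarith [isCDF_le_one hH y])
        (Set.Ioo_subset_Ioi_self.eventuallyLE)
    rw [setIntegral_const, Real.volume_real_Ioo_of_le hv0.le, smul_eq_mul]
      at hconst
    have hkey : (1 - α) * v ≤ C := by nlinarith
    rw [abs_of_pos hv0, le_div_iff₀ hmin]
    nlinarith [min_le_right α (1 - α)]

/-- VaR is Lipschitz in the norm `d`: under the quantile growth condition,
`|VaR_α(F) − VaR_α(G)| ≤ max{ b_α, (1 + 2 m(F)/M_α)/min{α, 1−α} } · d(F,G)`. -/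
theorem VaR_lipschitz (α : ℝ) (hα : α ∈ Set.Ioo (0 : ℝ) 1)
    (F : ℝ → ℝ) (hF : IsCDF F)
    (hIntF : IntegrableOn F (Set.Iic (0 : ℝ)))
    (hIntF' : IntegrableOn (fun y => 1 - F y) (Set.Ioi (0 : ℝ)))
    (bα Mα : ℝ) (hbα : 0 < bα) (hMα : 0 < Mα)
    (hgrowth : QuantileGrowth α F bα Mα)
    (G : ℝ → ℝ) (hG : IsCDF G)
    (hIntG : IntegrableOn G (Set.Iic (0 : ℝ)))
    (hIntG' : IntegrableOn (fun y => 1 - G y) (Set.Ioi (0 : ℝ))) :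
    |VaR α F - VaR α G| ≤
      max bα ((1 + 2 * mTail F / Mα) / min α (1 - α)) * dDist F G := by
  obtain ⟨hα0, hα1⟩ := hα
  set vF := VaR α F with hvF
  set vG := VaR α G with hvG
  set δ := ⨆ y : ℝ, |F y - G y| with hδdef
  set d := dDist F G with hddef
  have hbdd : BddAbove (Set.range fun y => |F y - G y|) := by
    refine ⟨2, ?_⟩
    rintro _ ⟨y, rfl⟩
    have h1 := isCDF_nonneg hF y; have h2 := isCDF_le_one hF y
    have h3 := isCDF_nonneg hG y; have h4 := isCDF_le_one hG y
    rw [abs_le]; constructor <;> linarith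
  have hδy : ∀ y, |F y - G y| ≤ δ := fun y => le_ciSup hbdd y
  have hδ0 : 0 ≤ δ := (abs_nonneg _).trans (hδy 0)
  have hδd : δ ≤ d := le_max_left _ _
  have hd0 : 0 ≤ d := hδ0.trans hδd
  have hmin : 0 < min α (1 - α) := lt_min hα0 (by linarith)
  have hm1 : (1:ℝ) ≤ mTail F := le_max_left _ _
  rcases lt_or_ge d Mα with hcase | hcase
  · -- growth case
    have hδM : δ < Mα := lt_of_le_of_lt hδd hcase
    have hFv : α ≤ F vF := le_F_VaR ⟨hα0, hα1⟩ hF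
    have hub : vG ≤ vF + bα * δ := by
      apply csInf_le (VaR_set_bddBelow ⟨hα0, hα1⟩ hG)
      have hg := hgrowth δ ⟨by linarith, hδM.le⟩
      have h1 : α ≤ F (vF + bα * δ) := hFv.trans (hF.1 (by nlinarith))
      rw [abs_of_nonneg hδ0, abs_of_nonneg (by linarith)] at hg
      have habs := abs_le.mp (hδy (vF + bα * δ))
      simp only [Set.mem_setOf_eq]
      linarith [habs.1]
    have hlb : vF - bα * δ ≤ vG := by
      apply le_csInf (VaR_set_nonempty ⟨hα0, hα1⟩ hG)
      intro y hy
      by_contra hcon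
      push_neg at hcon
      set y' := min ((vF - y) / bα) Mα with hy'def
      have ht : δ < (vF - y) / bα := by rw [lt_div_iff₀ hbα]; nlinarith
      have hy'δ : δ < y' := lt_min ht hδM
      have hy'M : y' ≤ Mα := min_le_right _ _
      have hg := hgrowth (-y') ⟨by linarith, by linarith⟩
      have hlt : vF + bα * (-y') < vF := by nlinarith
      have hfy' : F (vF + bα * (-y')) < α := F_lt_of_lt_VaR ⟨hα0, hα1⟩ hF hlt
      rw [abs_of_nonpos (by linarith), abs_of_nonpos (by linarith)] at hg
      have hle : y ≤ vF + bα * (-y') := by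
        have h := (le_div_iff₀ hbα).mp (min_le_left ((vF - y) / bα) Mα)
        nlinarith
      have hFy : F y ≤ F (vF + bα * (-y')) := hF.1 hle
      have habs := abs_le.mp (hδy y)
      simp only [Set.mem_setOf_eq] at hy
      linarith [habs.1]
    calc |vF - vG| ≤ bα * δ := abs_le.mpr ⟨by linarith, by linarith⟩
      _ ≤ bα * d := by nlinarith
      _ ≤ max bα ((1 + 2 * mTail F / Mα) / min α (1 - α)) * d :=
        mul_le_mul_of_nonneg_right (le_max_left _ _) hd0
  · -- integral case
    have hdI1 : |∫ y in Set.Iic (0:ℝ), (F y - G y)| ≤ d :=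
      (le_max_left _ _).trans (le_max_right _ _)
    have hdI2 : |∫ y in Set.Ioi (0:ℝ), (F y - G y)| ≤ d :=
      (le_max_right _ _).trans (le_max_right _ _)
    have hFle1 : (∫ y in Set.Iic (0:ℝ), F y) ≤ mTail F :=
      (le_max_left _ _).trans (le_max_right _ _)
    have hFle2 : (∫ y in Set.Ioi (0:ℝ), (1 - F y)) ≤ mTail F :=
      (le_max_right _ _).trans (le_max_right _ _)
    have hG1 : (∫ y in Set.Iic (0:ℝ), G y) ≤ mTail F + d := by
      have heq : (∫ y in Set.Iic (0:ℝ), (F y - G y)) =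
          (∫ y in Set.Iic (0:ℝ), F y) - ∫ y in Set.Iic (0:ℝ), G y :=
        integral_sub hIntF hIntG
      have h := (abs_le.mp hdI1).1
      rw [heq] at h
      linarith
    have hG2 : (∫ y in Set.Ioi (0:ℝ), (1 - G y)) ≤ mTail F + d := by
      have heq : (∫ y in Set.Ioi (0:ℝ), (F y - G y)) =
          (∫ y in Set.Ioi (0:ℝ), (1 - G y)) - ∫ y in Set.Ioi (0:ℝ), (1 - F y) := by
        rw [← integral_sub hIntG' hIntF']
        refine integral_congr_ae (Filter.Eventually.of_forall fun y => ?_)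
        ring
      have h := (abs_le.mp hdI2).2
      rw [heq] at h
      linarith
    have hvFb : |vF| ≤ mTail F / min α (1 - α) :=
      VaR_abs_le ⟨hα0, hα1⟩ hF hIntF hIntF' hFle1 hFle2
    have hvGb : |vG| ≤ (mTail F + d) / min α (1 - α) :=
      VaR_abs_le ⟨hα0, hα1⟩ hG hIntG hIntG' hG1 hG2
    have htri : |vF - vG| ≤ |vF| + |vG| := by
      rw [sub_eq_add_neg]
      exact (abs_add_le _ _).trans (by rw [abs_neg])
    have h2m : 2 * mTail F ≤ 2 * mTail F / Mα * d := by
      have h := mul_le_mul_of_nonneg_left hcase (by positivity : (0:ℝ) ≤ 2 * mTail F / Mα)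
      rwa [div_mul_cancel₀ _ hMα.ne'] at h
    have hstep : (2 * mTail F + d) / min α (1 - α) ≤
        (1 + 2 * mTail F / Mα) / min α (1 - α) * d := by
      rw [div_mul_eq_mul_div]
      gcongr
      · nlinarith
    calc |vF - vG| ≤ |vF| + |vG| := htri
      _ ≤ (2 * mTail F + d) / min α (1 - α) := by
          have heq : mTail F / min α (1 - α) + (mTail F + d) / min α (1 - α) =
              (2 * mTail F + d) / min α (1 - α) := by ring
          linarith
      _ ≤ (1 + 2 * mTail F / Mα) / min α (1 - α) * d := hstep
      _ ≤ max bα ((1 + 2 * mTail F / Mα) / min α (1 - α)) * d :=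
        mul_le_mul_of_nonneg_right (le_max_right _ _) hd0
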